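/- Let d ≥ 1 be an integer, p a prime, and k ≥ 1 an integer, and set m := p^k d. Then the contraction to ℤ of the ideal of ℤ[X] generated by Φ_d and Φ_m is the ideal generated by p; that is, (Φ_d, Φ_{p^k d}) ∩ ℤ = pℤ. -/

import Mathlib

open Polynomial

-- Step 1: p is in the span.
lemma pow_mem_span_cyclotomic (d p k : ℕ) (hd : 1 ≤ d) (hp : p.Prime) (hk : 1 ≤ k) :
    (C (p : ℤ)) ∈ Ideal.span {cyclotomic d ℤ, cyclotomic (p ^ k * d) ℤ} := by
  set q : ℕ := p ^ (k - 1) * d with hq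
  set m : ℕ := p ^ k * d with hm
  have hqm : q * p = m := by
    rw [hq, hm, mul_comm _ p, ← mul_assoc, ← pow_succ']
    congr 2
    omega
  have hq0 : 0 < q := Nat.mul_pos (pow_pos hp.pos _) hd
  have hqmem : q ∈ m.properDivisors := by
    rw [Nat.mem_properDivisors]
    constructor
    · exact ⟨p, hqm.symm⟩
    · calc q < q * p := (Nat.lt_mul_iff_one_lt_right hq0).mpr hp.one_lt
        _ = m := hqm
  set S : Polynomial ℤ := ∑ i ∈ Finset.range p, (X ^ q) ^ i with hS
  have hgs : S * (X ^ q - 1) = X ^ m - 1 := by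
    rw [hS, geom_sum_mul, ← pow_mul, hqm]
  -- cyclotomic m divides S
  obtain ⟨T, hT⟩ := X_pow_sub_one_mul_cyclotomic_dvd_X_pow_sub_one_of_dvd ℤ hqmem
  have hXq : (X ^ q - 1 : Polynomial ℤ) ≠ 0 := by
    have := X_pow_sub_C_ne_zero hq0 (1 : ℤ)
    simpa using this
  have hdvd1 : cyclotomic m ℤ ∣ S := by
    refine ⟨T, mul_right_cancel₀ hXq ?_⟩
    rw [hgs, hT]; ring
  -- cyclotomic d divides S - p
  have hdvd2 : cyclotomic d ℤ ∣ S - C (p : ℤ) := by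
    have hXd : cyclotomic d ℤ ∣ X ^ d - 1 := by
      rw [← prod_cyclotomic_eq_X_pow_sub_one hd ℤ]
      exact Finset.dvd_prod_of_mem _ (Nat.mem_divisors_self d (by omega))
    have : S - C (p : ℤ) = ∑ i ∈ Finset.range p, ((X ^ q) ^ i - 1) := by
      rw [Finset.sum_sub_distrib, hS]
      simp
    rw [this]
    refine Finset.dvd_sum fun i _ => hXd.trans ?_
    have : ((X : Polynomial ℤ) ^ q) ^ i = (X ^ d) ^ (p ^ (k - 1) * i) := by
      rw [← pow_mul, ← pow_mul, hq]; ring_nf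
    rw [this]
    have := sub_dvd_pow_sub_pow ((X : Polynomial ℤ) ^ d) 1 (p ^ (k - 1) * i)
    simpa using this
  obtain ⟨u, hu⟩ := hdvd1
  obtain ⟨v, hv⟩ := hdvd2
  rw [Ideal.mem_span_pair]
  exact ⟨-v, u, by linear_combination hv - hu⟩

-- Step 2: 1 is not in the span.
lemma one_not_mem_span_cyclotomic (d p k : ℕ) (hd : 1 ≤ d) (hp : p.Prime) (hk : 1 ≤ k) :
    (1 : Polynomial ℤ) ∉ Ideal.span {cyclotomic d ℤ, cyclotomic (p ^ k * d) ℤ} := by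
  haveI : Fact p.Prime := ⟨hp⟩
  obtain ⟨a, n, hpn, hdeq⟩ := Nat.exists_eq_pow_mul_and_not_dvd (by omega : d ≠ 0) p hp.ne_one
  have hn0 : n ≠ 0 := by rintro rfl; simp at hdeq; omega
  have key : ∀ b : ℕ, cyclotomic n (ZMod p) ∣ cyclotomic (p ^ b * n) (ZMod p) := by
    intro b
    rcases Nat.eq_zero_or_pos b with rfl | hb
    · simp
    · rw [cyclotomic_mul_prime_pow_eq (ZMod p) hpn hb]
      refine dvd_pow_self _ ?_
      have : p ^ (b - 1) < p ^ b := Nat.pow_lt_pow_right hp.one_lt (by omega)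
      omega
  intro h
  rw [Ideal.mem_span_pair] at h
  obtain ⟨u, v, huv⟩ := h
  have := congrArg (Polynomial.map (Int.castRingHom (ZMod p))) huv
  simp only [Polynomial.map_add, Polynomial.map_mul, Polynomial.map_one,
    map_cyclotomic_int] at this
  have hdvd : cyclotomic n (ZMod p) ∣ 1 := by
    rw [← this]
    have h1 : cyclotomic n (ZMod p) ∣ cyclotomic d (ZMod p) := by
      rw [hdeq]; exact key a
    have h2 : cyclotomic n (ZMod p) ∣ cyclotomic (p ^ k * d) (ZMod p) := by
      have : p ^ k * d = p ^ (k + a) * n := by rw [hdeq, pow_add]; ring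
      rw [this]; exact key (k + a)
    exact dvd_add (h1.mul_left _) (h2.mul_left _)
  have hmonic := cyclotomic.monic n (ZMod p)
  have := hmonic.isUnit_iff.mp (isUnit_of_dvd_one hdvd)
  have hdeg := congrArg natDegree this
  rw [natDegree_cyclotomic, natDegree_one] at hdeg
  have := Nat.totient_pos.mpr (Nat.pos_of_ne_zero hn0)
  omega

theorem comap_span_cyclotomic_eq_span_prime (d p k : ℕ) (hd : 1 ≤ d) (hp : p.Prime)
    (hk : 1 ≤ k) :
    Ideal.comap (algebraMap ℤ (Polynomial ℤ))
        (Ideal.span {cyclotomic d ℤ, cyclotomic (p ^ k * d) ℤ}) =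
      Ideal.span {(p : ℤ)} := by
  have hpz : ((p : ℤ)) ≠ 0 := by exact_mod_cast hp.ne_zero
  have hprime : Prime ((p : ℤ)) := Nat.prime_iff_prime_int.mp hp
  have hmax : (Ideal.span {(p : ℤ)}).IsMaximal := by
    haveI : (Ideal.span {(p : ℤ)}).IsPrime := (Ideal.span_singleton_prime hpz).mpr hprime
    exact IsPrime.to_maximal_ideal (by
      simpa [Ideal.span_singleton_eq_bot] using hpz : Ideal.span {(p : ℤ)} ≠ ⊥)
  have hle : Ideal.span {(p : ℤ)} ≤
      Ideal.comap (algebraMap ℤ (Polynomial ℤ))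
        (Ideal.span {cyclotomic d ℤ, cyclotomic (p ^ k * d) ℤ}) := by
    rw [Ideal.span_le]
    intro x hx
    simp only [Set.mem_singleton_iff] at hx
    subst hx
    rw [SetLike.mem_coe, Ideal.mem_comap]
    have := pow_mem_span_cyclotomic d p k hd hp hk
    convert this using 2
    exact Polynomial.algebraMap_eq
  have hne : Ideal.comap (algebraMap ℤ (Polynomial ℤ))
      (Ideal.span {cyclotomic d ℤ, cyclotomic (p ^ k * d) ℤ}) ≠ ⊤ := by
    intro h
    have : (1 : ℤ) ∈ Ideal.comap (algebraMap ℤ (Polynomial ℤ))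
        (Ideal.span {cyclotomic d ℤ, cyclotomic (p ^ k * d) ℤ}) := h ▸ trivial
    rw [Ideal.mem_comap, map_one] at this
    exact one_not_mem_span_cyclotomic d p k hd hp hk this
  exact (hmax.eq_of_le hne hle).symm
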